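/- Let λ ∈ ℝ, g : [0,T] → ℂ continuous, and suppose θ : [0,T] → ℂ is C¹ with θ(0) = 0 satisfying θ'(t) = g(t) − ∫ₜ^T e^{−iλ(s−t)}(θ(s) − iλ θ'(s)) ds. If g ≡ 0 on [0,T], then θ ≡ 0 on [0,T]. -/

import Mathlib

open intervalIntegral Set

theorem stmt_10 (T lam : ℝ) (hT : 0 ≤ T) (θ g : ℝ → ℂ)
    (hθ : ContDiff ℝ 1 θ) (hθ0 : θ 0 = 0) (hg : ContinuousOn g (Icc 0 T))
    (hvolterra : ∀ t ∈ Icc 0 T,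
      deriv θ t = g t - ∫ s in t..T, Complex.exp (-(Complex.I * (lam : ℂ) * ((s : ℂ) - (t : ℂ)))) *
        (θ s - Complex.I * (lam : ℂ) * deriv θ s))
    (hg0 : ∀ t ∈ Icc 0 T, g t = 0) :
    ∀ t ∈ Icc 0 T, θ t = 0 := by
  have hθc : Continuous θ := hθ.continuous
  have hθ'c : Continuous (deriv θ) := hθ.continuous_deriv le_rfl
  have hθd : ∀ t : ℝ, HasDerivAt θ (deriv θ t) t := fun t =>
    (hθ.differentiable one_ne_zero t).hasDerivAt
  set c : ℝ → ℂ := fun s => Complex.exp (-(Complex.I * (lam : ℂ) * (s : ℂ))) *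
      (θ s - Complex.I * (lam : ℂ) * deriv θ s) with hc_def
  have hc : Continuous c := by
    apply Continuous.mul
    · exact Complex.continuous_exp.comp (by continuity)
    · continuity
  set F : ℝ → ℂ := fun t => ∫ s in t..T, c s with hF_def
  have hF : ∀ t : ℝ, HasDerivAt F (-(c t)) t := by
    intro t
    have h : HasDerivAt (fun u => ∫ s in T..u, c s) (c t) t :=
      intervalIntegral.integral_hasDerivAt_right (hc.intervalIntegrable T t)
        (hc.stronglyMeasurableAtFilter _ _) hc.continuousAt
    have := h.neg
    simpa [hF_def, intervalIntegral.integral_symm T, Pi.neg_def] using this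
  set ψ : ℝ → ℂ := fun t => -(Complex.exp (Complex.I * (lam : ℂ) * (t : ℝ)) * F t) with hψ_def
  -- derivative of ψ
  have hexp : ∀ t : ℝ, HasDerivAt (fun t : ℝ => Complex.exp (Complex.I * (lam : ℂ) * (t : ℝ)))
      (Complex.I * (lam : ℂ) * Complex.exp (Complex.I * (lam : ℂ) * (t : ℝ))) t := by
    intro t
    have h1 : HasDerivAt (fun t : ℝ => Complex.I * (lam : ℂ) * (t : ℝ))
        (Complex.I * (lam : ℂ)) t := by
      simpa using (Complex.ofRealCLM.hasDerivAt (x := t)).const_mul (Complex.I * (lam : ℂ))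
    simpa [mul_comm] using h1.cexp
  have hψd : ∀ t : ℝ, HasDerivAt ψ
      (Complex.I * (lam : ℂ) * ψ t + Complex.exp (Complex.I * (lam : ℂ) * (t : ℝ)) * c t) t := by
    intro t
    have h := ((hexp t).mul (hF t)).neg
    convert h using 1
    · rfl
    · rfl
    simp only [hψ_def]
    ring
  -- the Volterra identity rewritten
  have key : ∀ t : ℝ,
      (∫ s in t..T, Complex.exp (-(Complex.I * (lam : ℂ) * ((s : ℂ) - (t : ℂ)))) *
        (θ s - Complex.I * (lam : ℂ) * deriv θ s))
      = Complex.exp (Complex.I * (lam : ℂ) * (t : ℝ)) * F t := by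
    intro t
    rw [hF_def, ← intervalIntegral.integral_const_mul]
    refine intervalIntegral.integral_congr fun s _ => ?_
    simp only [hc_def]
    rw [← mul_assoc, ← Complex.exp_add]
    congr 2
    ring
  have hψθ : ∀ t ∈ Icc 0 T, deriv θ t = ψ t := by
    intro t ht
    rw [hvolterra t ht, hg0 t ht, zero_sub, key t, hψ_def]
  have hψT : ψ T = 0 := by
    simp [hψ_def, hF_def, intervalIntegral.integral_same]
  -- ψ' = θ on the interval
  have hψ' : ∀ t ∈ Icc 0 T, HasDerivAt ψ (θ t) t := by
    intro t ht
    have h := hψd t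
    have hee : Complex.exp (Complex.I * (lam : ℂ) * (t : ℝ)) *
        Complex.exp (-(Complex.I * (lam : ℂ) * (t : ℝ))) = 1 := by
      rw [← Complex.exp_add]; simp
    have heq : Complex.I * (lam : ℂ) * ψ t +
        Complex.exp (Complex.I * (lam : ℂ) * (t : ℝ)) * c t = θ t := by
      simp only [hc_def]
      rw [← mul_assoc, hee, one_mul, ← hψθ t ht]
      ring
    rwa [heq] at h
  -- θ' = ψ on the interval
  have hθ' : ∀ t ∈ Icc 0 T, HasDerivAt θ (ψ t) t := by
    intro t ht
    have := hθd t
    rwa [hψθ t ht] at this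
  have hψc : Continuous ψ := by
    rw [continuous_iff_continuousAt]; exact fun t => (hψd t).continuousAt
  -- Energy E = ‖ψ‖² - ‖θ‖² is constant on [0,T]
  set E : ℝ → ℝ := fun t => (inner ℝ (ψ t) (ψ t) : ℝ) - (inner ℝ (θ t) (θ t) : ℝ) with hE_def
  have hEderiv : ∀ t ∈ Icc 0 T, HasDerivAt E 0 t := by
    intro t ht
    have h1 := (hψ' t ht).inner ℝ (hψ' t ht)
    have h2 := (hθ' t ht).inner ℝ (hθ' t ht)
    have h := h1.sub h2
    convert h using 1
    · rfl
    · rfl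
    · rfl
    ring
  have hEcont : ContinuousOn E (Icc 0 T) := by
    apply Continuous.continuousOn
    exact (hψc.inner hψc).sub (hθc.inner hθc)
  have hEconst : ∀ t ∈ Icc 0 T, E t = E 0 :=
    constant_of_has_deriv_right_zero hEcont
      (fun x hx => ((hEderiv x (Ico_subset_Icc_self hx)).hasDerivWithinAt))
  -- ψ 0 = 0 in the squared sense
  have hψ0 : (inner ℝ (ψ 0) (ψ 0) : ℝ) = 0 := by
    have hTmem : T ∈ Icc 0 T := ⟨hT, le_refl T⟩
    have h := hEconst T hTmem
    simp only [hE_def, hψT, hθ0, inner_zero_left] at h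
    -- h : 0 - inner ℝ (θ T) (θ T) = inner ℝ (ψ 0) (ψ 0) - 0
    have h1 : (inner ℝ (ψ 0) (ψ 0) : ℝ) = -(inner ℝ (θ T) (θ T) : ℝ) := by linarith
    have h2 : (0:ℝ) ≤ inner ℝ (ψ 0) (ψ 0) := real_inner_self_nonneg
    have h3 : (0:ℝ) ≤ inner ℝ (θ T) (θ T) := real_inner_self_nonneg
    linarith
  -- Grönwall: v = (‖θ‖² + ‖ψ‖²) e^{-2t} is antitone, nonneg, and v 0 = 0
  set u : ℝ → ℝ := fun t => (inner ℝ (θ t) (θ t) : ℝ) + (inner ℝ (ψ t) (ψ t) : ℝ) with hu_def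
  set v : ℝ → ℝ := fun t => u t * Real.exp (-2 * t) with hv_def
  have hud : ∀ t ∈ Icc 0 T, HasDerivAt u
      (((inner ℝ (θ t) (ψ t) : ℝ) + (inner ℝ (ψ t) (θ t) : ℝ)) +
       ((inner ℝ (ψ t) (θ t) : ℝ) + (inner ℝ (θ t) (ψ t) : ℝ))) t := by
    intro t ht
    exact ((hθ' t ht).inner ℝ (hθ' t ht)).add ((hψ' t ht).inner ℝ (hψ' t ht))
  have hvd : ∀ t ∈ Icc 0 T, HasDerivAt v
      ((((inner ℝ (θ t) (ψ t) : ℝ) + (inner ℝ (ψ t) (θ t) : ℝ)) +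
        ((inner ℝ (ψ t) (θ t) : ℝ) + (inner ℝ (θ t) (ψ t) : ℝ))) * Real.exp (-2 * t)
       + u t * (-2 * Real.exp (-2 * t))) t := by
    intro t ht
    have he : HasDerivAt (fun t : ℝ => Real.exp (-2 * t)) (-2 * Real.exp (-2 * t)) t := by
      have h1 : HasDerivAt (fun t : ℝ => -2 * t) (-2 : ℝ) t := by
        simpa using (hasDerivAt_id t).const_mul (-2 : ℝ)
      simpa [mul_comm] using h1.exp
    exact (hud t ht).mul he
  have hvnonpos : ∀ t ∈ Icc 0 T, (((inner ℝ (θ t) (ψ t) : ℝ) + (inner ℝ (ψ t) (θ t) : ℝ)) +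
        ((inner ℝ (ψ t) (θ t) : ℝ) + (inner ℝ (θ t) (ψ t) : ℝ))) * Real.exp (-2 * t)
       + u t * (-2 * Real.exp (-2 * t)) ≤ 0 := by
    intro t ht
    have hcs : (inner ℝ (θ t) (ψ t) : ℝ) ≤ ‖θ t‖ * ‖ψ t‖ := real_inner_le_norm _ _
    have hcs' : (inner ℝ (ψ t) (θ t) : ℝ) ≤ ‖θ t‖ * ‖ψ t‖ := by
      rw [← real_inner_comm]; exact hcs
    have ham : 2 * (‖θ t‖ * ‖ψ t‖) ≤ ‖θ t‖ ^ 2 + ‖ψ t‖ ^ 2 := by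
      have := two_mul_le_add_sq (‖θ t‖) (‖ψ t‖); linarith
    have hu_eq : u t = ‖θ t‖ ^ 2 + ‖ψ t‖ ^ 2 := by
      simp [hu_def, real_inner_self_eq_norm_sq]
    have hexp_pos : (0:ℝ) < Real.exp (-2 * t) := Real.exp_pos _
    nlinarith [hexp_pos]
  have hvanti : AntitoneOn v (Icc 0 T) := by
    apply antitoneOn_of_deriv_nonpos (convex_Icc 0 T)
    · apply Continuous.continuousOn
      exact ((hθc.inner hθc).add (hψc.inner hψc)).mul
        (Real.continuous_exp.comp (continuous_const.mul continuous_id))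
    · intro x hx
      rw [interior_Icc] at hx
      exact ((hvd x (Ioo_subset_Icc_self hx)).differentiableAt).differentiableWithinAt
    · intro x hx
      rw [interior_Icc] at hx
      rw [(hvd x (Ioo_subset_Icc_self hx)).deriv]
      exact hvnonpos x (Ioo_subset_Icc_self hx)
  -- conclude
  intro t ht
  have h0 : (0:ℝ) ∈ Icc 0 T := ⟨le_refl 0, hT⟩
  have hv0 : v 0 = 0 := by
    have hu0 : u 0 = 0 := by
      simp only [hu_def]
      rw [hθ0, hψ0, inner_zero_left, add_zero]
    simp [hv_def, hu0]
  have hle : v t ≤ 0 := by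
    have := hvanti h0 ht ht.1
    rwa [hv0] at this
  have hθnn : (0:ℝ) ≤ inner ℝ (θ t) (θ t) := real_inner_self_nonneg
  have hψnn : (0:ℝ) ≤ inner ℝ (ψ t) (ψ t) := real_inner_self_nonneg
  have hexp_pos : (0:ℝ) < Real.exp (-2 * t) := Real.exp_pos _
  have hut : u t = 0 := by
    have hge : 0 ≤ v t := by
      simp only [hv_def, hu_def]
      positivity
    have : v t = 0 := le_antisymm hle hge
    simp only [hv_def] at this
    rcases mul_eq_zero.mp this with h | h
    · exact h
    · exact absurd h (ne_of_gt hexp_pos)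
  have : (inner ℝ (θ t) (θ t) : ℝ) = 0 := by
    simp only [hu_def] at hut
    linarith
  exact inner_self_eq_zero.mp this
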